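/- Let W be a subspace of a multipartite Hilbert space with geometric measure of genuine entanglement G_GME(W) = min over unit vectors ψ ∈ W of G_GME(ψ), and let Π_W be the orthogonal projector onto W. If a density operator ρ satisfies Tr(ρ Π_W) + G_GME(W) − 1 > 0, then ρ is genuinely entangled, i.e., ρ is not a convex combination of projections onto biseparable pure states. -/

import Mathlib

set_option linter.unusedSectionVars false
set_option maxHeartbeats 1000000

open scoped ComplexOrder

/-- Largest eigenvalue of a Hermitian matrix, as the supremum of its quadratic form
over unit vectors. -/
noncomputable def lmax {m : Type*} [Fintype m] (ρ : Matrix m m ℂ) : ℝ :=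
  sSup {r : ℝ | ∃ v : m → ℂ, (∑ i, Complex.normSq (v i)) = 1 ∧
    r = (dotProduct (star v) (ρ.mulVec v)).re}

/-- Merge configurations on the parties in `A` and its complement into a full
configuration. -/
def merge {n : ℕ} {d : Fin n → Type*} (A : Finset (Fin n))
    (x : ∀ i : {i // i ∈ A}, d i) (z : ∀ i : {i // i ∉ A}, d i) : ∀ i, d i :=
  fun i => if h : i ∈ A then x ⟨i, h⟩ else z ⟨i, h⟩

/-- Largest squared Schmidt coefficient of `ψ` across the cut `A|Ā`. -/
noncomputable def lmaxCut {n : ℕ} {d : Fin n → Type*} [∀ i, Fintype (d i)]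
    [∀ i, DecidableEq (d i)] (A : Finset (Fin n)) (ψ : (∀ i, d i) → ℂ) : ℝ :=
  lmax (Matrix.of fun x y : ∀ i : {i // i ∈ A}, d i =>
    ∑ z : ∀ i : {i // i ∉ A}, d i, ψ (merge A x z) * star (ψ (merge A y z)))

/-- `ψ` factorizes as a product across the bipartite cut `A|Ā`. -/
def ProdAcross {n : ℕ} {d : Fin n → Type*} (A : Finset (Fin n)) (ψ : (∀ i, d i) → ℂ) :
    Prop :=
  ∃ (u : (∀ i : {i // i ∈ A}, d i) → ℂ) (v : (∀ i : {i // i ∉ A}, d i) → ℂ),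
    ∀ x : ∀ i, d i, ψ x = u (fun i => x i) * v (fun i => x i)

/-- A pure state is biseparable if it is a product across some nontrivial bipartite cut. -/
def Bisep {n : ℕ} {d : Fin n → Type*} (ψ : (∀ i, d i) → ℂ) : Prop :=
  ∃ A : Finset (Fin n), A.Nonempty ∧ A ≠ Finset.univ ∧ ProdAcross A ψ

/-- Geometric measure of genuine multipartite entanglement of a pure state. -/
noncomputable def GGME {n : ℕ} {d : Fin n → Type*} [∀ i, Fintype (d i)]
    [∀ i, DecidableEq (d i)] (ψ : (∀ i, d i) → ℂ) : ℝ :=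
  sInf {r : ℝ | ∃ A : Finset (Fin n), A.Nonempty ∧ A ≠ Finset.univ ∧
    r = 1 - lmaxCut A ψ}

/-- Geometric measure of genuine entanglement of a subspace: that of its least
entangled unit vector. -/
noncomputable def GGMEsub {n : ℕ} {d : Fin n → Type*} [∀ i, Fintype (d i)]
    [∀ i, DecidableEq (d i)] (W : Submodule ℂ ((∀ i, d i) → ℂ)) : ℝ :=
  sInf {r : ℝ | ∃ ψ ∈ W, (∑ x, Complex.normSq (ψ x)) = 1 ∧ r = GGME ψ}

/-- Rank-one projector `|ψ⟩⟨ψ|`. -/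
def proj {m : Type*} (ψ : m → ℂ) : Matrix m m ℂ := Matrix.of fun i j => ψ i * star (ψ j)

/-! ### Auxiliary lemmas -/

lemma cs_aux {ι : Type*} [Fintype ι] (f g : ι → ℂ) :
    Complex.normSq (∑ i, star (f i) * g i) ≤
      (∑ i, Complex.normSq (f i)) * (∑ i, Complex.normSq (g i)) := by
  have h1 : ‖∑ i, star (f i) * g i‖ ≤ ∑ i, ‖f i‖ * ‖g i‖ := by
    refine (norm_sum_le _ _).trans_eq ?_
    refine Finset.sum_congr rfl fun i _ => ?_
    simp
  have h2 := Finset.sum_mul_sq_le_sq_mul_sq Finset.univ (fun i => ‖f i‖)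
      (fun i => ‖g i‖)
  calc Complex.normSq (∑ i, star (f i) * g i)
      = ‖∑ i, star (f i) * g i‖ ^ 2 := by rw [Complex.sq_norm]
    _ ≤ (∑ i, ‖f i‖ * ‖g i‖) ^ 2 := by
        apply pow_le_pow_left₀ (norm_nonneg _) h1
    _ ≤ (∑ i, ‖f i‖ ^ 2) * (∑ i, ‖g i‖ ^ 2) := h2
    _ = _ := by simp [Complex.sq_norm]

lemma lmax_bddAbove {m : Type*} [Fintype m] (ρ : Matrix m m ℂ) :
    BddAbove {r : ℝ | ∃ v : m → ℂ, (∑ i, Complex.normSq (v i)) = 1 ∧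
      r = (dotProduct (star v) (ρ.mulVec v)).re} := by
  refine ⟨∑ i, ∑ j, ‖ρ i j‖, ?_⟩
  rintro r ⟨v, hv, rfl⟩
  have hvle : ∀ i, ‖v i‖ ≤ 1 := by
    intro i
    have h1 : Complex.normSq (v i) ≤ 1 := by
      rw [← hv]
      exact Finset.single_le_sum (fun j _ => Complex.normSq_nonneg (v j)) (Finset.mem_univ i)
    nlinarith [Complex.sq_norm (v i), norm_nonneg (v i)]
  calc (dotProduct (star v) (ρ.mulVec v)).re
      ≤ ‖dotProduct (star v) (ρ.mulVec v)‖ := Complex.re_le_norm _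
    _ ≤ ∑ i, ‖star (v i) * (ρ.mulVec v) i‖ := by
        unfold dotProduct; exact norm_sum_le _ _
    _ ≤ ∑ i, ∑ j, ‖ρ i j‖ := by
        refine Finset.sum_le_sum fun i _ => ?_
        rw [norm_mul]
        calc ‖star (v i)‖ * ‖(ρ.mulVec v) i‖
            ≤ 1 * ‖(ρ.mulVec v) i‖ := by
              apply mul_le_mul_of_nonneg_right _ (norm_nonneg _)
              simpa using hvle i
          _ = ‖∑ j, ρ i j * v j‖ := by rw [one_mul]; rfl
          _ ≤ ∑ j, ‖ρ i j * v j‖ := norm_sum_le _ _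
          _ ≤ ∑ j, ‖ρ i j‖ := by
              refine Finset.sum_le_sum fun j _ => ?_
              rw [norm_mul]
              calc ‖ρ i j‖ * ‖v j‖
                  ≤ ‖ρ i j‖ * 1 :=
                    mul_le_mul_of_nonneg_left (hvle j) (norm_nonneg _)
                _ = _ := mul_one _

section Multi

variable {n : ℕ} {d : Fin n → Type*} [∀ i, Fintype (d i)] [∀ i, DecidableEq (d i)]

lemma merge_left (A : Finset (Fin n)) (x : ∀ i : {i // i ∈ A}, d i)
    (z : ∀ i : {i // i ∉ A}, d i) : (fun i : {i // i ∈ A} => merge A x z i) = x := by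
  funext i
  simp [merge, i.2]

lemma merge_right (A : Finset (Fin n)) (x : ∀ i : {i // i ∈ A}, d i)
    (z : ∀ i : {i // i ∉ A}, d i) : (fun i : {i // i ∉ A} => merge A x z i) = z := by
  funext i
  simp [merge, i.2]

lemma sum_merge {M : Type*} [AddCommMonoid M] (A : Finset (Fin n)) (f : (∀ i, d i) → M) :
    ∑ w, f w = ∑ x : ∀ i : {i // i ∈ A}, d i, ∑ z : ∀ i : {i // i ∉ A}, d i,
      f (merge A x z) := by
  rw [← (Equiv.piEquivPiSubtypeProd (· ∈ A) d).symm.sum_comp f, Fintype.sum_prod_type]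
  rfl

lemma rayleigh_eq (A : Finset (Fin n)) (ψ : (∀ i, d i) → ℂ)
    (u : (∀ i : {i // i ∈ A}, d i) → ℂ) :
    dotProduct (star u) ((Matrix.of fun x y : ∀ i : {i // i ∈ A}, d i =>
      ∑ z : ∀ i : {i // i ∉ A}, d i, ψ (merge A x z) * star (ψ (merge A y z))).mulVec u)
    = ((∑ z : ∀ i : {i // i ∉ A}, d i,
        Complex.normSq (∑ x, star (u x) * ψ (merge A x z)) : ℝ) : ℂ) := by
  have hz : ∀ z : ∀ i : {i // i ∉ A}, d i,
      ((Complex.normSq (∑ x, star (u x) * ψ (merge A x z)) : ℝ) : ℂ)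
      = ∑ x, ∑ y, star (u x) * ψ (merge A x z) * (u y * star (ψ (merge A y z))) := by
    intro z
    rw [← Complex.mul_conj]
    rw [show (starRingEnd ℂ) (∑ x, star (u x) * ψ (merge A x z))
        = ∑ y, u y * star (ψ (merge A y z)) by
      rw [map_sum]
      refine Finset.sum_congr rfl fun y _ => ?_
      simp [mul_comm]]
    rw [Finset.sum_mul]
    exact Finset.sum_congr rfl fun x _ => by rw [Finset.mul_sum]
  push_cast [hz]
  have hswap : (∑ z : ∀ i : {i // i ∉ A}, d i, ∑ x, ∑ y,
        star (u x) * ψ (merge A x z) * (u y * star (ψ (merge A y z))))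
      = ∑ x, ∑ y, ∑ z : ∀ i : {i // i ∉ A}, d i,
        star (u x) * ψ (merge A x z) * (u y * star (ψ (merge A y z))) := by
    rw [Finset.sum_comm]
    exact Finset.sum_congr rfl fun x _ => Finset.sum_comm
  rw [hswap]
  simp only [dotProduct, Matrix.mulVec, Matrix.of_apply, Pi.star_apply,
    Finset.mul_sum, Finset.sum_mul]
  exact Finset.sum_congr rfl fun x _ => Finset.sum_congr rfl fun y _ =>
    Finset.sum_congr rfl fun z _ => by ring

/-- Key inequality: the overlap of a product state (across cut `A`) with `ψ` is at most
the largest squared Schmidt coefficient of `ψ` across that cut. -/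
lemma overlap_le (A : Finset (Fin n)) (φ ψ : (∀ i, d i) → ℂ)
    (hφ1 : (∑ x, Complex.normSq (φ x)) = 1) (hprod : ProdAcross A φ) :
    Complex.normSq (∑ x, star (φ x) * ψ x) ≤ lmaxCut A ψ := by
  obtain ⟨u, v, huv⟩ := hprod
  have hφm : ∀ (x : ∀ i : {i // i ∈ A}, d i) (z : ∀ i : {i // i ∉ A}, d i),
      φ (merge A x z) = u x * v z := by
    intro x z
    rw [huv, merge_left, merge_right]
  set a : ℝ := ∑ x, Complex.normSq (u x) with ha
  set b : ℝ := ∑ z, Complex.normSq (v z) with hb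
  have hab : a * b = 1 := by
    rw [← hφ1, sum_merge A]
    rw [Finset.sum_mul_sum]
    refine (Finset.sum_congr rfl fun x _ => Finset.sum_congr rfl fun z _ => ?_).symm
    rw [hφm, Complex.normSq_mul]
  have ha0 : 0 ≤ a := Finset.sum_nonneg fun x _ => Complex.normSq_nonneg _
  have hapos : 0 < a := by
    rcases ha0.lt_or_eq with h | h
    · exact h
    · exfalso; rw [← h, zero_mul] at hab; exact zero_ne_one hab
  have hsa : Real.sqrt a ≠ 0 := by positivity
  set u' : (∀ i : {i // i ∈ A}, d i) → ℂ := fun x => ((Real.sqrt a : ℝ) : ℂ)⁻¹ * u x with hu'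
  set v' : (∀ i : {i // i ∉ A}, d i) → ℂ := fun z => ((Real.sqrt a : ℝ) : ℂ) * v z with hv'
  have hu'1 : (∑ x, Complex.normSq (u' x)) = 1 := by
    simp only [hu', Complex.normSq_mul, ← Finset.mul_sum]
    rw [Complex.normSq_inv]
    simp only [Complex.normSq_ofReal]
    rw [Real.mul_self_sqrt ha0]
    field_simp
    exact ha.symm
  have hv'1 : (∑ z, Complex.normSq (v' z)) = 1 := by
    simp only [hv', Complex.normSq_mul, ← Finset.mul_sum]
    simp only [Complex.normSq_ofReal]
    rw [Real.mul_self_sqrt ha0, ← hb, hab]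
  have hprod' : ∀ (x : ∀ i : {i // i ∈ A}, d i) (z : ∀ i : {i // i ∉ A}, d i),
      u' x * v' z = u x * v z := by
    intro x z
    simp only [hu', hv']
    have : ((Real.sqrt a : ℝ) : ℂ) ≠ 0 := by exact_mod_cast hsa
    field_simp
  set t : (∀ i : {i // i ∉ A}, d i) → ℂ :=
    fun z => ∑ x, star (u' x) * ψ (merge A x z) with ht
  have hs : (∑ w, star (φ w) * ψ w) = ∑ z, star (v' z) * t z := by
    rw [sum_merge A, Finset.sum_comm]
    refine Finset.sum_congr rfl fun z _ => ?_
    rw [ht, Finset.mul_sum]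
    refine Finset.sum_congr rfl fun x _ => ?_
    rw [hφm, ← hprod', star_mul]
    ring
  have hcs : Complex.normSq (∑ w, star (φ w) * ψ w) ≤ ∑ z, Complex.normSq (t z) := by
    rw [hs]
    calc Complex.normSq (∑ z, star (v' z) * t z)
        ≤ (∑ z, Complex.normSq (v' z)) * (∑ z, Complex.normSq (t z)) := cs_aux v' t
      _ = ∑ z, Complex.normSq (t z) := by rw [hv'1, one_mul]
  refine hcs.trans ?_
  have hmem : (∑ z, Complex.normSq (t z)) ∈ {r : ℝ |
      ∃ w : (∀ i : {i // i ∈ A}, d i) → ℂ, (∑ x, Complex.normSq (w x)) = 1 ∧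
      r = (dotProduct (star w) ((Matrix.of fun x y : ∀ i : {i // i ∈ A}, d i =>
        ∑ z : ∀ i : {i // i ∉ A}, d i,
          ψ (merge A x z) * star (ψ (merge A y z))).mulVec w)).re} := by
    refine ⟨u', hu'1, ?_⟩
    rw [rayleigh_eq, Complex.ofReal_re]
  exact le_csSup (lmax_bddAbove _) hmem

lemma lmaxCut_le_one (A : Finset (Fin n)) (ψ : (∀ i, d i) → ℂ)
    (hψ : (∑ x, Complex.normSq (ψ x)) = 1) : lmaxCut A ψ ≤ 1 := by
  refine Real.sSup_le ?_ zero_le_one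
  rintro r ⟨u, hu, rfl⟩
  rw [rayleigh_eq, Complex.ofReal_re]
  calc (∑ z : ∀ i : {i // i ∉ A}, d i, Complex.normSq (∑ x, star (u x) * ψ (merge A x z)))
      ≤ ∑ z : ∀ i : {i // i ∉ A}, d i, (∑ x, Complex.normSq (u x)) *
        (∑ x, Complex.normSq (ψ (merge A x z))) :=
        Finset.sum_le_sum fun z _ => cs_aux u _
    _ = ∑ z : ∀ i : {i // i ∉ A}, d i, ∑ x, Complex.normSq (ψ (merge A x z)) := by
        simp [hu]
    _ = 1 := by rw [← hψ, sum_merge A (fun w => Complex.normSq (ψ w)), Finset.sum_comm]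

lemma lmaxCut_nonneg (A : Finset (Fin n)) (ψ : (∀ i, d i) → ℂ)
    (hne : Nonempty (∀ i, d i)) : 0 ≤ lmaxCut A ψ := by
  obtain ⟨w⟩ := hne
  set a : ∀ i : {i // i ∈ A}, d i := fun i => w i with hawit
  classical
  set u : (∀ i : {i // i ∈ A}, d i) → ℂ := fun x => if x = a then 1 else 0 with hu
  have hu1 : (∑ x, Complex.normSq (u x)) = 1 := by
    rw [hu]
    rw [Finset.sum_eq_single a]
    · simp
    · intro x _ hx; simp [hx]
    · intro hx; exact (hx (Finset.mem_univ a)).elim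
  have hmem : ((∑ z : ∀ i : {i // i ∉ A}, d i,
      Complex.normSq (∑ x, star (u x) * ψ (merge A x z))) : ℝ) ∈ {r : ℝ |
      ∃ v : (∀ i : {i // i ∈ A}, d i) → ℂ, (∑ x, Complex.normSq (v x)) = 1 ∧
      r = (dotProduct (star v) ((Matrix.of fun x y : ∀ i : {i // i ∈ A}, d i =>
        ∑ z : ∀ i : {i // i ∉ A}, d i,
          ψ (merge A x z) * star (ψ (merge A y z))).mulVec v)).re} :=
    ⟨u, hu1, by rw [rayleigh_eq, Complex.ofReal_re]⟩
  have h0 : (0 : ℝ) ≤ ∑ z : ∀ i : {i // i ∉ A}, d i,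
      Complex.normSq (∑ x, star (u x) * ψ (merge A x z)) :=
    Finset.sum_nonneg fun z _ => Complex.normSq_nonneg _
  exact h0.trans (le_csSup (lmax_bddAbove _) hmem)

lemma GGME_nonneg (ψ : (∀ i, d i) → ℂ) (hψ : (∑ x, Complex.normSq (ψ x)) = 1) :
    0 ≤ GGME ψ := by
  refine Real.sInf_nonneg ?_
  rintro r ⟨A, -, -, rfl⟩
  have := lmaxCut_le_one A ψ hψ
  linarith

lemma GGMEsub_nonneg (W : Submodule ℂ ((∀ i, d i) → ℂ)) : 0 ≤ GGMEsub W := by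
  refine Real.sInf_nonneg ?_
  rintro r ⟨ψ, -, hψ, rfl⟩
  exact GGME_nonneg ψ hψ

lemma GGMEsub_le_GGME (W : Submodule ℂ ((∀ i, d i) → ℂ)) (ψ : (∀ i, d i) → ℂ)
    (hmem : ψ ∈ W) (hψ : (∑ x, Complex.normSq (ψ x)) = 1) : GGMEsub W ≤ GGME ψ := by
  refine csInf_le ?_ ⟨ψ, hmem, hψ, rfl⟩
  exact ⟨0, by rintro r ⟨ψ', -, hψ', rfl⟩; exact GGME_nonneg ψ' hψ'⟩

lemma GGME_le (ψ : (∀ i, d i) → ℂ) (hψ : (∑ x, Complex.normSq (ψ x)) = 1)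
    (A : Finset (Fin n)) (hA1 : A.Nonempty) (hA2 : A ≠ Finset.univ) :
    GGME ψ ≤ 1 - lmaxCut A ψ := by
  refine csInf_le ?_ ⟨A, hA1, hA2, rfl⟩
  refine ⟨0, ?_⟩
  rintro r ⟨A', -, -, rfl⟩
  have := lmaxCut_le_one A' ψ hψ
  linarith

lemma GGMEsub_le_one (W : Submodule ℂ ((∀ i, d i) → ℂ))
    (A : Finset (Fin n)) (hA1 : A.Nonempty) (hA2 : A ≠ Finset.univ) :
    GGMEsub W ≤ 1 := by
  by_cases hset : {r : ℝ | ∃ ψ ∈ W, (∑ x, Complex.normSq (ψ x)) = 1 ∧ r = GGME ψ}.Nonempty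
  · obtain ⟨r, ψ, hmemW, hψ1, rfl⟩ := hset
    refine (GGMEsub_le_GGME W ψ hmemW hψ1).trans ?_
    have hne : Nonempty (∀ i, d i) := by
      by_contra hne
      rw [not_nonempty_iff] at hne
      rw [Finset.sum_eq_zero (fun x _ => (hne.false x).elim)] at hψ1
      exact zero_ne_one hψ1
    have h1 := GGME_le ψ hψ1 A hA1 hA2
    have h2 := lmaxCut_nonneg A ψ hne
    linarith
  · rw [Set.not_nonempty_iff_eq_empty] at hset
    unfold GGMEsub
    rw [hset, Real.sInf_empty]
    exact zero_le_one

end Multi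

lemma state_le {n : ℕ} {d : Fin n → Type*} [∀ i, Fintype (d i)] [∀ i, DecidableEq (d i)]
    (W : Submodule ℂ ((∀ i, d i) → ℂ))
    (PW : Matrix (∀ i, d i) (∀ i, d i) ℂ)
    (hPherm : PW.IsHermitian) (hPidem : PW * PW = PW)
    (hPrange : ∀ ψ : (∀ i, d i) → ℂ, ψ ∈ W ↔ PW.mulVec ψ = ψ)
    (hG : GGMEsub W ≤ 1)
    (φ : (∀ i, d i) → ℂ) (hφ1 : (∑ x, Complex.normSq (φ x)) = 1) (hbisep : Bisep φ) :
    (dotProduct (star φ) (PW.mulVec φ)).re ≤ 1 - GGMEsub W := by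
  set ψ : (∀ i, d i) → ℂ := PW.mulVec φ with hψ
  have hPψ : PW.mulVec ψ = ψ := by
    rw [hψ, Matrix.mulVec_mulVec, hPidem]
  have hψW : ψ ∈ W := (hPrange ψ).2 hPψ
  set c : ℝ := ∑ x, Complex.normSq (ψ x) with hc
  have hc0 : 0 ≤ c := Finset.sum_nonneg fun x _ => Complex.normSq_nonneg _
  have hstarψ : Matrix.vecMul (star φ) PW = star ψ := by
    rw [hψ, Matrix.star_mulVec, hPherm.eq]
  have hdot : dotProduct (star φ) (PW.mulVec φ) = (c : ℂ) := by
    calc dotProduct (star φ) (PW.mulVec φ)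
        = dotProduct (star φ) (PW.mulVec ψ) := by rw [hPψ]
      _ = dotProduct (Matrix.vecMul (star φ) PW) ψ := by rw [Matrix.dotProduct_mulVec]
      _ = dotProduct (star ψ) ψ := by rw [hstarψ]
      _ = (c : ℂ) := by
          rw [hc]
          push_cast
          simp only [dotProduct, Pi.star_apply]
          exact Finset.sum_congr rfl fun x _ => Complex.normSq_eq_conj_mul_self.symm
  rw [hdot, Complex.ofReal_re]
  rcases hc0.lt_or_eq with hcpos | hczero
  · -- c > 0
    have hsc : Real.sqrt c ≠ 0 := by positivity
    have hscC : ((Real.sqrt c : ℝ) : ℂ) ≠ 0 := by exact_mod_cast hsc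
    set ψh : (∀ i, d i) → ℂ := (((Real.sqrt c : ℝ) : ℂ))⁻¹ • ψ with hψh
    have hψhW : ψh ∈ W := W.smul_mem _ hψW
    have hψh1 : (∑ x, Complex.normSq (ψh x)) = 1 := by
      simp only [hψh, Pi.smul_apply, smul_eq_mul, Complex.normSq_mul, ← Finset.mul_sum,
        Complex.normSq_inv, Complex.normSq_ofReal, Real.mul_self_sqrt hc0]
      rw [← hc]
      field_simp
    have hsval : (∑ x, star (φ x) * ψh x) = (((Real.sqrt c : ℝ) : ℂ))⁻¹ * (c : ℂ) := by
      rw [← hdot]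
      simp only [hψh, Pi.smul_apply, smul_eq_mul]
      rw [show (∑ x, star (φ x) * ((((Real.sqrt c : ℝ) : ℂ))⁻¹ * ψ x))
          = (((Real.sqrt c : ℝ) : ℂ))⁻¹ * ∑ x, star (φ x) * ψ x by
        rw [Finset.mul_sum]; exact Finset.sum_congr rfl fun x _ => by ring]
      rfl
    have hnormSq : Complex.normSq (∑ x, star (φ x) * ψh x) = c := by
      rw [hsval, Complex.normSq_mul, Complex.normSq_inv, Complex.normSq_ofReal,
        Real.mul_self_sqrt hc0, Complex.normSq_ofReal]
      field_simp
    obtain ⟨A, hA1, hA2, hprodA⟩ := hbisep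
    have hover := overlap_le A φ ψh hφ1 hprodA
    rw [hnormSq] at hover
    have h1 := GGME_le ψh hψh1 A hA1 hA2
    have h2 := GGMEsub_le_GGME W ψh hψhW hψh1
    linarith
  · -- c = 0
    rw [← hczero]
    linarith

theorem stmt8 {n : ℕ} {d : Fin n → Type*} [∀ i, Fintype (d i)] [∀ i, DecidableEq (d i)]
    (W : Submodule ℂ ((∀ i, d i) → ℂ))
    (PW ρ : Matrix (∀ i, d i) (∀ i, d i) ℂ)
    (hPherm : PW.IsHermitian) (hPidem : PW * PW = PW)
    (hPrange : ∀ ψ : (∀ i, d i) → ℂ, ψ ∈ W ↔ PW.mulVec ψ = ψ)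
    (hρ : ρ.PosSemidef) (hρtr : ρ.trace = 1)
    (h : ((ρ * PW).trace).re + GGMEsub W - 1 > 0) :
    ¬ ∃ (m : ℕ) (p : Fin m → ℝ) (φ : Fin m → ((∀ i, d i) → ℂ)),
        (∀ k, 0 ≤ p k) ∧ (∑ k, p k = 1) ∧
        (∀ k, (∑ x, Complex.normSq (φ k x)) = 1 ∧ Bisep (φ k)) ∧
        ρ = ∑ k, (p k : ℂ) • proj (φ k) := by
  rintro ⟨m, p, φ, hp, hpsum, hφ, rfl⟩
  have hm : 0 < m := by
    rcases Nat.eq_zero_or_pos m with h0 | h0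
    · subst h0; simp at hpsum
    · exact h0
  obtain ⟨A, hA1, hA2, -⟩ := (hφ ⟨0, hm⟩).2
  have hG : GGMEsub W ≤ 1 := GGMEsub_le_one W A hA1 hA2
  have htr : ((∑ k, (p k : ℂ) • proj (φ k)) * PW).trace
      = ∑ k, (p k : ℂ) * dotProduct (star (φ k)) (PW.mulVec (φ k)) := by
    rw [Finset.sum_mul, Matrix.trace_sum]
    refine Finset.sum_congr rfl fun k _ => ?_
    rw [Matrix.smul_mul, Matrix.trace_smul, smul_eq_mul]
    congr 1
    simp only [Matrix.trace, Matrix.diag, Matrix.mul_apply, proj, Matrix.of_apply,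
      dotProduct, Matrix.mulVec, Pi.star_apply, Finset.mul_sum]
    rw [Finset.sum_comm]
    exact Finset.sum_congr rfl fun i _ => Finset.sum_congr rfl fun j _ => by ring
  rw [htr] at h
  have hre : (∑ k, (p k : ℂ) * dotProduct (star (φ k)) (PW.mulVec (φ k))).re
      = ∑ k, p k * (dotProduct (star (φ k)) (PW.mulVec (φ k))).re := by
    rw [Complex.re_sum]
    exact Finset.sum_congr rfl fun k _ => Complex.re_ofReal_mul _ _
  rw [hre] at h
  have hbound : (∑ k, p k * (dotProduct (star (φ k)) (PW.mulVec (φ k))).re)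
      ≤ 1 - GGMEsub W := by
    calc (∑ k, p k * (dotProduct (star (φ k)) (PW.mulVec (φ k))).re)
        ≤ ∑ k, p k * (1 - GGMEsub W) := Finset.sum_le_sum fun k _ =>
          mul_le_mul_of_nonneg_left
            (state_le W PW hPherm hPidem hPrange hG (φ k) (hφ k).1 (hφ k).2) (hp k)
      _ = 1 - GGMEsub W := by rw [← Finset.sum_mul, hpsum, one_mul]
  linarith
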